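/- Given the heat kernel expansions, the finite (ε→0) part of the variation δ log(det'Δ_s^- /Z_k) equals (1/2π)∫_Σ [((s-1)/2 Δ_g δφ + kδψ)(B/2 + (1-3s)R/12) - (s/2 Δ_g δφ + kδψ)(-B/2 + (3s-2)R/12)] √g d²z = k²δS_2 - k((1-2s)/2)δS_1 - ((1-2s)²/4 - 1/12)δS_L, using the variational formulas for S_2, S_1, S_L. -/
import Mathlib


open MeasureTheory

/-- The finite (`ε → 0`) part of the variation `δ log(det'Δ_s^- ÷ Z_k)` equals
`(1/2π)∫_Σ [((s-1)/2 Δ_g δφ + kδψ)(B/2 + (1-3s)R/12)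
           - (s/2 Δ_g δφ + kδψ)(-B/2 + (3s-2)R/12)] √g d²z
 = k² δS_2 - k((1-2s)/2) δS_1 - ((1-2s)²/4 - 1/12) δS_L`,
using the variational formulas
`δS_2 = (1/2π)∫ (B/k) δψ √g`, `δS_1 = (1/4π)∫ (-R δψ + (1/k)(Δ_g B) δφ) √g`,
`δS_L = (1/8π)∫ (Δ_g R) δφ √g`, integration by parts (self-adjointness of `Δ_g`) on
the closed surface `Σ`, the flux normalization `(1/2π)∫ B√g = k`, and Gauss–Bonnet
`(1/4π)∫ R√g = χ(Σ)`.  Here `μ` is the volume measure `√g d²z`. -/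
theorem finite_part_variation {X : Type*} [MeasurableSpace X] (μ : Measure X)
    (k s χ : ℝ) (hk : 0 < k)
    (Δg : (X → ℝ) →ₗ[ℝ] (X → ℝ)) (B R δφ δψ : X → ℝ)
    (hflux : (1 / (2 * Real.pi)) * ∫ x, B x ∂μ = k)
    (hGB : (1 / (4 * Real.pi)) * ∫ x, R x ∂μ = χ)
    (hsaB : ∫ x, Δg δφ x * B x ∂μ = ∫ x, δφ x * Δg B x ∂μ)
    (hsaR : ∫ x, Δg δφ x * R x ∂μ = ∫ x, δφ x * Δg R x ∂μ)
    (i1 : Integrable (fun x => δψ x * B x) μ)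
    (i2 : Integrable (fun x => δψ x * R x) μ)
    (i3 : Integrable (fun x => Δg δφ x * B x) μ)
    (i4 : Integrable (fun x => Δg δφ x * R x) μ)
    (i5 : Integrable (fun x => δφ x * Δg B x) μ)
    (i6 : Integrable (fun x => δφ x * Δg R x) μ) :
    (1 / (2 * Real.pi)) *
        ∫ x, (((s - 1) / 2 * Δg δφ x + k * δψ x) * (B x / 2 + (1 - 3 * s) * R x / 12)
          - (s / 2 * Δg δφ x + k * δψ x) * (-(B x) / 2 + (3 * s - 2) * R x / 12)) ∂μ
    = k ^ 2 * ((1 / (2 * Real.pi)) * ∫ x, (B x / k) * δψ x ∂μ)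
      - k * ((1 - 2 * s) / 2) *
          ((1 / (4 * Real.pi)) * ∫ x, (-(R x) * δψ x + (1 / k) * Δg B x * δφ x) ∂μ)
      - ((1 - 2 * s) ^ 2 / 4 - 1 / 12) *
          ((1 / (8 * Real.pi)) * ∫ x, Δg R x * δφ x ∂μ) := by

  have hk' : k ≠ 0 := ne_of_gt hk
  have e1 : ∀ x, (((s - 1) / 2 * Δg δφ x + k * δψ x) * (B x / 2 + (1 - 3 * s) * R x / 12)
          - (s / 2 * Δg δφ x + k * δψ x) * (-(B x) / 2 + (3 * s - 2) * R x / 12))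
      = ((2 * s - 1) / 4) * (Δg δφ x * B x)
        + ((-6 * s ^ 2 + 6 * s - 1) / 24) * (Δg δφ x * R x)
        + k * (δψ x * B x)
        + (k * (1 - 2 * s) / 4) * (δψ x * R x) := by
    intro x; ring
  have hLHS : ∫ x, (((s - 1) / 2 * Δg δφ x + k * δψ x) * (B x / 2 + (1 - 3 * s) * R x / 12)
          - (s / 2 * Δg δφ x + k * δψ x) * (-(B x) / 2 + (3 * s - 2) * R x / 12)) ∂μ
      = ((2 * s - 1) / 4) * ∫ x, Δg δφ x * B x ∂μ
        + ((-6 * s ^ 2 + 6 * s - 1) / 24) * ∫ x, Δg δφ x * R x ∂μ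
        + k * ∫ x, δψ x * B x ∂μ
        + (k * (1 - 2 * s) / 4) * ∫ x, δψ x * R x ∂μ := by
    simp only [e1]
    rw [integral_add, integral_add, integral_add, integral_const_mul,
      integral_const_mul, integral_const_mul, integral_const_mul]
    · exact i3.const_mul _
    · exact i4.const_mul _
    · exact (i3.const_mul _).add (i4.const_mul _)
    · exact i1.const_mul _
    · exact ((i3.const_mul _).add (i4.const_mul _)).add (i1.const_mul _)
    · exact i2.const_mul _
  have h2 : ∫ x, (B x / k) * δψ x ∂μ = (1 / k) * ∫ x, δψ x * B x ∂μ := by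
    rw [← integral_const_mul]
    congr 1; funext x; ring
  have h3 : ∫ x, (-(R x) * δψ x + (1 / k) * Δg B x * δφ x) ∂μ
      = (-1) * (∫ x, δψ x * R x ∂μ) + (1 / k) * ∫ x, δφ x * Δg B x ∂μ := by
    calc ∫ x, (-(R x) * δψ x + (1 / k) * Δg B x * δφ x) ∂μ
        = ∫ x, ((-1) * (δψ x * R x) + (1 / k) * (δφ x * Δg B x)) ∂μ := by
          congr 1; funext x; ring
      _ = (-1) * (∫ x, δψ x * R x ∂μ) + (1 / k) * ∫ x, δφ x * Δg B x ∂μ := by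
          rw [integral_add (i2.const_mul _) (i5.const_mul _), integral_const_mul,
            integral_const_mul]
  have h4 : ∫ x, Δg R x * δφ x ∂μ = ∫ x, δφ x * Δg R x ∂μ := by
    congr 1; funext x; ring
  rw [hLHS, h2, h3, h4, hsaB, hsaR]
  field_simp
  ring
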